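/- Let G : [a, b] → ℝ be differentiable with the property that G(θ) ≥ 0 implies G'(θ) < 0. If G(θ̃) ≥ 0 for some θ̃ ∈ (a, b], then G(θ) > 0 for all θ ∈ [a, θ̃). -/
import Mathlib

open Set Filter Topology

lemma key_13 (a b : ℝ) (G : ℝ → ℝ)
    (hdiff : ∀ θ ∈ Set.Icc a b, DifferentiableAt ℝ G θ)
    (hprop : ∀ θ ∈ Set.Icc a b, 0 ≤ G θ → deriv G θ < 0)
    (u v : ℝ) (hu : u ∈ Set.Icc a b) (hv : v ∈ Set.Icc a b) (huv : u < v)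
    (hGu : G u ≤ 0) (hGv : 0 < G v) : False := by
  have hsub : Icc u v ⊆ Icc a b := Icc_subset_Icc hu.1 hv.2
  have hcont : ContinuousOn G (Icc u v) := fun x hx =>
    ((hdiff x (hsub hx)).continuousAt).continuousWithinAt
  set S : Set ℝ := {x ∈ Icc u v | G x ≤ 0} with hS
  have hSne : S.Nonempty := ⟨u, ⟨le_refl u, huv.le⟩, hGu⟩
  have hSbdd : BddAbove S := ⟨v, fun x hx => hx.1.2⟩
  set c := sSup S with hc
  have hcIcc : c ∈ Icc u v := by
    constructor
    · exact le_csSup hSbdd ⟨⟨le_refl u, huv.le⟩, hGu⟩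
    · exact csSup_le hSne fun x hx => hx.1.2
  have hccl : c ∈ closure S := csSup_mem_closure hSne hSbdd
  have hnb : (𝓝[S] c).NeBot := mem_closure_iff_nhdsWithin_neBot.mp hccl
  have hGc_le : G c ≤ 0 := by
    have ht : Tendsto G (𝓝[S] c) (𝓝 (G c)) :=
      ((hdiff c (hsub hcIcc)).continuousAt).continuousWithinAt.mono (fun x hx => trivial)
    exact le_of_tendsto ht (eventually_nhdsWithin_of_forall fun x hx => hx.2)
  have hcv : c < v := lt_of_le_of_ne hcIcc.2 (fun h => by
    rw [h] at hGc_le; linarith)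
  have hGc : G c = 0 := by
    rcases lt_or_eq_of_le hGc_le with hlt | heq
    · exfalso
      have hivt := intermediate_value_Icc hcIcc.2 (hcont.mono (Icc_subset_Icc hcIcc.1 le_rfl))
      have h0 : (0:ℝ) ∈ Icc (G c) (G v) := ⟨hlt.le, hGv.le⟩
      obtain ⟨x, hx, hGx⟩ := hivt h0
      have hxS : x ∈ S := ⟨⟨hcIcc.1.trans hx.1, hx.2⟩, hGx.le⟩
      have : x ≤ c := le_csSup hSbdd hxS
      have : x = c := le_antisymm this hx.1
      rw [this] at hGx; linarith
    · exact heq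
  have hderiv : deriv G c < 0 := hprop c (hsub hcIcc) (by rw [hGc])
  have hhd : HasDerivAt G (deriv G c) c := (hdiff c (hsub hcIcc)).hasDerivAt
  have hslope : Tendsto (slope G c) (𝓝[≠] c) (𝓝 (deriv G c)) :=
    hasDerivAt_iff_tendsto_slope.mp hhd
  have hslope' : Tendsto (slope G c) (𝓝[>] c) (𝓝 (deriv G c)) :=
    hslope.mono_left (nhdsWithin_mono c fun x hx => ne_of_gt hx)
  have hev : ∀ᶠ x in 𝓝[>] c, slope G c x < 0 :=
    hslope'.eventually (Filter.Tendsto.eventually_lt_const hderiv tendsto_id)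
  have hmem : Ioo c v ∈ 𝓝[>] c := Ioo_mem_nhdsGT_of_mem ⟨le_rfl, hcv⟩
  obtain ⟨x, hxs, hxIoo⟩ := (hev.and (eventually_of_mem hmem fun x hx => hx)).exists
  have hxc : c < x := hxIoo.1
  have hGx : G x < 0 := by
    have hsl : (G x - G c) / (x - c) < 0 := by
      have := hxs; rwa [slope_def_field] at this
    have hd : 0 < x - c := sub_pos.mpr hxc
    rcases div_neg_iff.mp hsl with ⟨h1,h2⟩|⟨h1,h2⟩ <;> linarith
  have hxS : x ∈ S := ⟨⟨hcIcc.1.trans hxc.le, hxIoo.2.le⟩, hGx.le⟩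
  have : x ≤ c := le_csSup hSbdd hxS
  linarith

theorem stmt_13 (a b θtil : ℝ) (G : ℝ → ℝ)
    (hab : a < b)
    (hdiff : ∀ θ ∈ Set.Icc a b, DifferentiableAt ℝ G θ)
    (hprop : ∀ θ ∈ Set.Icc a b, 0 ≤ G θ → deriv G θ < 0)
    (hθtil : θtil ∈ Set.Ioc a b) (hG : 0 ≤ G θtil) :
    ∀ θ ∈ Set.Ico a θtil, 0 < G θ := by
  intro θ hθ
  by_contra hle
  push_neg at hle
  have hθab : θ ∈ Icc a b := ⟨hθ.1, (hθ.2.le.trans hθtil.2)⟩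
  have hθtilab : θtil ∈ Icc a b := ⟨hθtil.1.le, hθtil.2⟩
  rcases lt_or_eq_of_le hG with hGt | hGeq
  · exact key_13 a b G hdiff hprop θ θtil hθab hθtilab hθ.2 hle hGt
  · -- G θtil = 0; find x ∈ (θ, θtil) with G x > 0
    have hderiv : deriv G θtil < 0 := hprop θtil hθtilab hG
    have hhd : HasDerivAt G (deriv G θtil) θtil := (hdiff θtil hθtilab).hasDerivAt
    have hslope : Tendsto (slope G θtil) (𝓝[≠] θtil) (𝓝 (deriv G θtil)) :=
      hasDerivAt_iff_tendsto_slope.mp hhd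
    have hslope' : Tendsto (slope G θtil) (𝓝[<] θtil) (𝓝 (deriv G θtil)) :=
      hslope.mono_left (nhdsWithin_mono θtil fun x hx => ne_of_lt hx)
    have hev : ∀ᶠ x in 𝓝[<] θtil, slope G θtil x < 0 :=
      hslope'.eventually (Filter.Tendsto.eventually_lt_const hderiv tendsto_id)
    have hmem : Ioo θ θtil ∈ 𝓝[<] θtil := Ioo_mem_nhdsLT_of_mem ⟨hθ.2, le_rfl⟩
    obtain ⟨x, hxs, hxIoo⟩ := (hev.and (eventually_of_mem hmem fun x hx => hx)).exists
    have hGx : 0 < G x := by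
      have hsl : (G x - G θtil) / (x - θtil) < 0 := by
        have := hxs; rwa [slope_def_field] at this
      have hd : x - θtil < 0 := sub_neg.mpr hxIoo.2
      rcases div_neg_iff.mp hsl with ⟨h1,h2⟩|⟨h1,h2⟩ <;> linarith
    have hxab : x ∈ Icc a b := ⟨hθ.1.trans hxIoo.1.le, hxIoo.2.le.trans hθtil.2⟩
    exact key_13 a b G hdiff hprop θ x hθab hxab hxIoo.1 hle hGx
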